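/- For every n ≥ 1, d ≥ 1, every pair of subsets A, B ⊆ [n], and every τ ≥ 0, P( |e_π(A,B) − μ| ≥ τ·μ ) ≤ 2·exp( −τ²·μ / (2 + τ) ), where π = (π1,…,πd) is a tuple of d independent uniformly random permutations of [n] and μ = (d/n)·|A|·|B|. -/

import Mathlib

open scoped Classical

noncomputable section

/-- Number of directed edges from `A` to `B` in the permutation model, counting
multiplicity: `e_π(A,B) = Σ_k #{i ∈ A : π_k(i) ∈ B}`. -/
def eperm {n d : ℕ} (π : Fin d → Equiv.Perm (Fin n)) (A B : Finset (Fin n)) : ℕ :=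
  ∑ k : Fin d, (A.filter fun i => π k i ∈ B).card

/-- Probability of the event `E` for a uniformly random `d`-tuple of permutations of `[n]`. -/
def PrPerm (n d : ℕ) (E : (Fin d → Equiv.Perm (Fin n)) → Prop) : ℝ :=
  ((Finset.univ.filter fun π : Fin d → Equiv.Perm (Fin n) => E π).card : ℝ) /
    (Fintype.card (Fin d → Equiv.Perm (Fin n)) : ℝ)

-- E2 : 2t ≤ e^t - e^{-t}
lemma E2 {t : ℝ} (ht : 0 ≤ t) : 2*t ≤ Real.exp t - Real.exp (-t) := by
  have hq := Real.quadratic_le_exp_of_nonneg ht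
  have hu : 0 < Real.exp t := Real.exp_pos t
  have hinv : Real.exp (-t) = (Real.exp t)⁻¹ := by rw [Real.exp_neg]
  rw [hinv]
  have hmul : Real.exp t * (Real.exp t)⁻¹ = 1 := mul_inv_cancel₀ (ne_of_gt hu)
  nlinarith [sq_nonneg (t*t), sq_nonneg (Real.exp t - 1 - t - t^2/2), inv_pos.mpr hu,
    mul_pos hu hu]

-- E1 : 2(e^t - 1) ≤ t (e^t + 1)
lemma E1 {t : ℝ} (ht : 0 ≤ t) : 2*(Real.exp t - 1) ≤ t*(Real.exp t + 1) := by
  rcases le_or_gt t 1 with h1 | h1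
  · have hb := Real.exp_bound' ht h1 (n := 3) (by norm_num)
    have : Real.exp t ≤ 1 + t + t^2/2 + t^3*(2/9) := by
      refine hb.trans_eq ?_
      rw [Finset.sum_range_succ, Finset.sum_range_succ, Finset.sum_range_succ,
        Finset.sum_range_zero]
      norm_num [Nat.factorial]
      ring
    nlinarith [Real.add_one_le_exp t, pow_nonneg ht 3, pow_nonneg ht 4, sq_nonneg t]
  · rcases le_or_gt 2 t with h2 | h2
    · nlinarith [Real.exp_pos t, Real.add_one_le_exp t]
    · set s := t - 1 with hs
      have hs0 : 0 ≤ s := by simp [hs]; linarith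
      have hs1 : s ≤ 1 := by simp [hs]; linarith
      have hes : Real.exp s ≤ 1 + s + s^2/2 + s^3*(2/9) := by
        refine (Real.exp_bound' hs0 hs1 (n := 3) (by norm_num)).trans_eq ?_
        rw [Finset.sum_range_succ, Finset.sum_range_succ, Finset.sum_range_succ,
          Finset.sum_range_zero]
        norm_num [Nat.factorial]
        ring
      have hkey : (1 - s) * Real.exp s ≤ 1 := by
        nlinarith [pow_nonneg hs0 3, pow_nonneg hs0 4, sq_nonneg s, Real.exp_pos s]
      have het : Real.exp t = Real.exp 1 * Real.exp s := by
        rw [← Real.exp_add]; norm_num [hs]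
      have he1 : Real.exp 1 < 2.7182818286 := Real.exp_one_lt_d9
      have hh : (2 - t) * Real.exp t ≤ 2 + t := by
        have : (2 - t) * Real.exp t = Real.exp 1 * ((1 - s) * Real.exp s) := by
          rw [het, hs]; ring
        rw [this]
        calc Real.exp 1 * ((1 - s) * Real.exp s) ≤ Real.exp 1 * 1 := by
              apply mul_le_mul_of_nonneg_left hkey (le_of_lt (Real.exp_pos 1))
          _ ≤ 2 + t := by rw [mul_one]; linarith
      linarith

-- upper-tail exponent
lemma U2 {τ : ℝ} (hτ : 0 ≤ τ) : τ^2/(2+τ) ≤ (1+τ)*Real.log (1+τ) - τ := by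
  have hy : (0:ℝ) < 1 + τ := by linarith
  set L := Real.log (1+τ) with hL
  have hL0 : 0 ≤ L := Real.log_nonneg (by linarith)
  have h1 := E1 (t := L) hL0
  rw [Real.exp_log hy] at h1
  -- 2((1+τ)-1) ≤ L((1+τ)+1)  i.e. 2τ ≤ (2+τ) L
  have h2 : 2*τ ≤ (2+τ)*L := by nlinarith
  rw [div_le_iff₀ (by linarith : (0:ℝ) < 2+τ)]
  nlinarith [mul_le_mul_of_nonneg_left h2 (show (0:ℝ) ≤ 1+τ by linarith)]

-- lower-tail exponent
lemma L2 {τ : ℝ} (hτ : 0 ≤ τ) (hτ1 : τ < 1) :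
    τ^2/(2+τ) ≤ τ + (1-τ)*Real.log (1-τ) := by
  set z := 1 - τ with hz
  have hz0 : 0 < z := by simp [hz]; linarith
  have hz1 : z ≤ 1 := by simp [hz]; linarith
  have hy : 0 ≤ Real.log z⁻¹ := Real.log_nonneg ((one_le_inv₀ hz0).mpr hz1)
  have h1 := E2 (t := Real.log z⁻¹) hy
  rw [Real.exp_log (by positivity), ← Real.log_inv, inv_inv, Real.exp_log hz0] at h1
  -- h1 : 2 * (- log z) ≤ z⁻¹ - z
  have hLz : (z - z⁻¹)/2 ≤ Real.log z := by rw [Real.log_inv] at h1; linarith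
  have hzz : z * z⁻¹ = 1 := mul_inv_cancel₀ (ne_of_gt hz0)
  have hzL : (z^2 - 1)/2 ≤ z * Real.log z := by
    have := mul_le_mul_of_nonneg_left hLz (le_of_lt hz0)
    nlinarith
  rw [div_le_iff₀ (by linarith : (0:ℝ) < 2+τ)]
  have h2τ : 2 + τ = 3 - z := by rw [hz]; ring
  have hτz : τ = 1 - z := by rw [hz]; ring
  nlinarith [mul_le_mul_of_nonneg_right hzL (show (0:ℝ) ≤ 3 - z by linarith),
    sq_nonneg (1-z)]

lemma anal {a b N : ℕ} (r : ℝ) (hr : 0 ≤ r) (ha : 1 ≤ a) (haN : a ≤ N) (hN : 2 ≤ N) :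
    (b:ℝ)/N * r * Real.exp ((r-1)*((a:ℝ)-1)*((b:ℝ)-1)/((N:ℝ)-1))
      + (1 - (b:ℝ)/N) * Real.exp ((r-1)*((a:ℝ)-1)*(b:ℝ)/((N:ℝ)-1))
    ≤ Real.exp ((r-1)*(a:ℝ)*(b:ℝ)/(N:ℝ)) := by
  have hNR : (2:ℝ) ≤ (N:ℝ) := by exact_mod_cast hN
  have haR : (1:ℝ) ≤ (a:ℝ) := by exact_mod_cast ha
  have haNR : (a:ℝ) ≤ (N:ℝ) := by exact_mod_cast haN
  have hN1 : (0:ℝ) < (N:ℝ) - 1 := by linarith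
  have hN0 : (0:ℝ) < (N:ℝ) := by linarith
  set c := r - 1 with hc
  set c' := c*((a:ℝ)-1)/((N:ℝ)-1) with hc'
  set δ := c*((N:ℝ)-a)/((N:ℝ)-1) with hδ
  set p := (b:ℝ)/(N:ℝ) with hp
  have hp0 : 0 ≤ p := by positivity
  have hcδ : c' + δ = c := by rw [hc', hδ, ← add_div, div_eq_iff (ne_of_gt hN1)]; ring
  have hδc' : 0 ≤ δ * c' := by
    rw [hδ, hc', div_mul_div_comm]
    apply div_nonneg _ (by positivity)
    nlinarith [mul_nonneg (mul_self_nonneg c)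
      (mul_nonneg (show (0:ℝ) ≤ (N:ℝ)-(a:ℝ) by linarith) (show (0:ℝ) ≤ (a:ℝ)-1 by linarith))]
  have h1δ : 0 ≤ 1 + δ := by
    rcases le_or_gt 0 c with h | h
    · have : 0 ≤ δ := by
        rw [hδ]; apply div_nonneg (mul_nonneg h (by linarith)) (by linarith)
      linarith
    · have ht1 : ((N:ℝ)-a)/((N:ℝ)-1) ≤ 1 := by
        rw [div_le_one hN1]; linarith
      have hδc : c ≤ δ := by
        rw [hδ, mul_div_assoc]
        nlinarith
      have : -1 ≤ c := by rw [hc]; linarith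
      linarith
  -- step 1 : r ≤ (1+δ) * exp c'
  have step1 : r ≤ (1+δ) * Real.exp c' := by
    have h2 : (1+δ)*(1+c') ≤ (1+δ)*Real.exp c' := by
      apply mul_le_mul_of_nonneg_left _ h1δ
      linarith [Real.add_one_le_exp c']
    have h3 : r ≤ (1+δ)*(1+c') := by nlinarith [hδc', hcδ]
    linarith
  -- reduced inequality
  have main : p * r * Real.exp (-c') + (1 - p) ≤ Real.exp (p*δ) := by
    have h4 : r * Real.exp (-c') ≤ 1 + δ := by
      have := mul_le_mul_of_nonneg_right step1 (le_of_lt (Real.exp_pos (-c')))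
      rw [mul_assoc, ← Real.exp_add] at this
      simpa using this
    have h5 : p * (r * Real.exp (-c')) ≤ p * (1+δ) := mul_le_mul_of_nonneg_left h4 hp0
    have h6 : 1 + p*δ ≤ Real.exp (p*δ) := by linarith [Real.add_one_le_exp (p*δ)]
    nlinarith
  -- reassemble
  have idE1 : Real.exp ((r-1)*((a:ℝ)-1)*((b:ℝ)-1)/((N:ℝ)-1))
      = Real.exp ((r-1)*((a:ℝ)-1)*(b:ℝ)/((N:ℝ)-1)) * Real.exp (-c') := by
    rw [← Real.exp_add]; congr 1; rw [hc', hc]; field_simp; ring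
  have idR : Real.exp ((r-1)*(a:ℝ)*(b:ℝ)/(N:ℝ))
      = Real.exp ((r-1)*((a:ℝ)-1)*(b:ℝ)/((N:ℝ)-1)) * Real.exp (p*δ) := by
    rw [← Real.exp_add]; congr 1; rw [hδ, hp, hc]; field_simp; ring
  rw [idE1, idR]
  have hE2pos : 0 ≤ Real.exp ((r-1)*((a:ℝ)-1)*(b:ℝ)/((N:ℝ)-1)) :=
    le_of_lt (Real.exp_pos _)
  calc (b:ℝ)/N * r * (Real.exp ((r-1)*((a:ℝ)-1)*(b:ℝ)/((N:ℝ)-1)) * Real.exp (-c'))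
        + (1 - (b:ℝ)/N) * Real.exp ((r-1)*((a:ℝ)-1)*(b:ℝ)/((N:ℝ)-1))
      = Real.exp ((r-1)*((a:ℝ)-1)*(b:ℝ)/((N:ℝ)-1)) * (p * r * Real.exp (-c') + (1 - p)) := by
        rw [hp]; ring
    _ ≤ Real.exp ((r-1)*((a:ℝ)-1)*(b:ℝ)/((N:ℝ)-1)) * Real.exp (p*δ) :=
        mul_le_mul_of_nonneg_left main hE2pos

set_option maxHeartbeats 2000000 in
lemma key : ∀ (N : ℕ) (α : Type) [Fintype α] [DecidableEq α], Fintype.card α = N →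
    ∀ (A B : Finset α) (r : ℝ), 0 ≤ r →
    ∑ σ : Equiv.Perm α, r ^ ((A.filter fun i => σ i ∈ B).card)
      ≤ (Nat.factorial N : ℝ) * Real.exp ((r - 1) * (A.card:ℝ) * (B.card:ℝ) / (N:ℝ)) := by
  intro N
  induction N using Nat.strong_induction_on with
  | _ N IH =>
    intro α _ _ hcard A B r hr
    rcases Finset.eq_empty_or_nonempty A with hA | hAne
    · subst hA
      simp only [Finset.filter_empty, Finset.card_empty, pow_zero, Nat.cast_zero,
        mul_zero, zero_mul, zero_div, Real.exp_zero, mul_one]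
      rw [Finset.sum_const, Finset.card_univ, Fintype.card_perm, hcard]
      simp
    · obtain ⟨i₀, hi₀⟩ := hAne
      haveI : Nonempty α := ⟨i₀⟩
      have hN1 : 1 ≤ N := by rw [← hcard]; exact Fintype.card_pos
      have hcard' : Fintype.card {x : α // x ≠ i₀} = N - 1 := by
        have h2 := Fintype.card_subtype_compl (fun x : α => x = i₀)
        rw [Fintype.card_subtype_eq] at h2
        rw [← hcard]; exact h2
      have ha1 : 1 ≤ A.card := Finset.card_pos.mpr ⟨i₀, hi₀⟩
      have haN : A.card ≤ N := by rw [← hcard, ← Finset.card_univ]; exact Finset.card_le_univ A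
      have hbN : B.card ≤ N := by rw [← hcard, ← Finset.card_univ]; exact Finset.card_le_univ B
      set A' : Finset {x : α // x ≠ i₀} := (A.erase i₀).subtype (fun x => x ≠ i₀) with hA'
      have hA'card : A'.card = A.card - 1 := by
        rw [hA', Finset.card_subtype, Finset.filter_true_of_mem
          (fun x hx => (Finset.mem_erase.mp hx).1), Finset.card_erase_of_mem hi₀]
      have hBcard' : ∀ j : α,
          (Finset.univ.filter (fun y : {x : α // x ≠ i₀} => Equiv.swap i₀ j y.1 ∈ B)).card
            = (B.erase j).card := by
        intro j
        apply Finset.card_bij (fun y _ => Equiv.swap i₀ j y.1)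
        · intro y hy
          rw [Finset.mem_filter] at hy
          rw [Finset.mem_erase]
          refine ⟨?_, hy.2⟩
          intro hcontra
          exact y.2 (by
            have := congrArg (Equiv.swap i₀ j) hcontra
            rwa [Equiv.swap_apply_self, Equiv.swap_apply_right] at this)
        · intro y₁ h₁ y₂ h₂ h
          exact Subtype.ext ((Equiv.swap i₀ j).injective h)
        · intro y hy
          rw [Finset.mem_erase] at hy
          have hne : Equiv.swap i₀ j y ≠ i₀ := by
            intro hcontra
            have := congrArg (Equiv.swap i₀ j) hcontra
            rw [Equiv.swap_apply_self, Equiv.swap_apply_left] at this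
            exact hy.1 this
          refine ⟨⟨Equiv.swap i₀ j y, hne⟩, ?_, ?_⟩
          · rw [Finset.mem_filter]
            exact ⟨Finset.mem_univ _, by rw [Equiv.swap_apply_self]; exact hy.2⟩
          · rw [Equiv.swap_apply_self]
      -- fiber decomposition
      have hfib : (∑ σ : Equiv.Perm α, r ^ ((A.filter fun i => σ i ∈ B).card))
          = ∑ j : α, ∑ σ ∈ Finset.univ.filter (fun σ : Equiv.Perm α => σ i₀ = j),
              r ^ ((A.filter fun i => σ i ∈ B).card) :=
        (Finset.sum_fiberwise_of_maps_to (fun σ _ => Finset.mem_univ (σ i₀)) _).symm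
      -- per-fiber identity
      have hfiber : ∀ j : α, ∑ σ ∈ Finset.univ.filter (fun σ : Equiv.Perm α => σ i₀ = j),
            r ^ ((A.filter fun i => σ i ∈ B).card)
          = (if j ∈ B then r else 1) *
            ∑ τ : Equiv.Perm {x : α // x ≠ i₀},
              r ^ ((A'.filter fun x => Equiv.swap i₀ j (τ x).1 ∈ B).card) := by
        intro j
        rw [Finset.mul_sum]
        have hΦi₀ : ∀ τ : Equiv.Perm {x : α // x ≠ i₀},
            ((Equiv.Perm.ofSubtype τ).trans (Equiv.swap i₀ j)) i₀ = j := by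
          intro τ
          simp only [Equiv.trans_apply]
          rw [Equiv.Perm.ofSubtype_apply_of_not_mem τ (by simp), Equiv.swap_apply_left]
        have hΦx : ∀ (τ : Equiv.Perm {x : α // x ≠ i₀}) (x : α) (hx : x ≠ i₀),
            ((Equiv.Perm.ofSubtype τ).trans (Equiv.swap i₀ j)) x
              = Equiv.swap i₀ j (τ ⟨x, hx⟩).1 := by
          intro τ x hx
          simp only [Equiv.trans_apply]
          rw [Equiv.Perm.ofSubtype_apply_of_mem τ hx]
        refine (Finset.sum_nbij
          (i := fun τ : Equiv.Perm {x : α // x ≠ i₀} =>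
            (Equiv.Perm.ofSubtype τ).trans (Equiv.swap i₀ j)) ?_ ?_ ?_ ?_).symm
        · intro τ _
          rw [Finset.mem_filter]
          exact ⟨Finset.mem_univ _, hΦi₀ τ⟩
        · intro τ₁ _ τ₂ _ h
          apply Equiv.ext
          intro x
          apply Subtype.ext
          have hx := DFunLike.congr_fun h x.1
          simp only [Equiv.trans_apply] at hx
          have h2 := (Equiv.swap i₀ j).injective hx
          rw [Equiv.Perm.ofSubtype_apply_of_mem τ₁ x.2,
            Equiv.Perm.ofSubtype_apply_of_mem τ₂ x.2] at h2
          simpa using h2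
        · intro σ hσ
          rw [Finset.coe_filter, Set.mem_setOf_eq] at hσ
          obtain ⟨-, hσj⟩ := hσ
          have hπ : ∀ x : α, x ≠ i₀ ↔ (σ.trans (Equiv.swap i₀ j)) x ≠ i₀ := by
            intro x
            have hfix : (σ.trans (Equiv.swap i₀ j)) i₀ = i₀ := by
              simp only [Equiv.trans_apply]; rw [hσj, Equiv.swap_apply_right]
            constructor
            · intro hx hcontra
              exact hx ((σ.trans (Equiv.swap i₀ j)).injective (hcontra.trans hfix.symm))
            · intro hx hcontra
              exact hx (by rw [hcontra, hfix])
          refine ⟨Equiv.Perm.subtypePerm (σ.trans (Equiv.swap i₀ j)) (fun x => (hπ x).symm), Finset.mem_coe.mpr (Finset.mem_univ _), ?_⟩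
          apply Equiv.ext
          intro x
          by_cases hx : x = i₀
          · subst hx
            rw [hΦi₀, hσj]
          · rw [hΦx _ x hx]
            simp only [Equiv.Perm.subtypePerm_apply, Equiv.trans_apply, Subtype.coe_mk,
              Equiv.swap_apply_self]
        · intro τ _
          have hsplit : (A.filter fun i =>
                ((Equiv.Perm.ofSubtype τ).trans (Equiv.swap i₀ j)) i ∈ B).card
              = (if j ∈ B then 1 else 0)
                + (A'.filter fun x => Equiv.swap i₀ j (τ x).1 ∈ B).card := by
            have hAeq : A = insert i₀ (A.erase i₀) := (Finset.insert_erase hi₀).symm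
            have hcards : ((A.erase i₀).filter fun i =>
                  ((Equiv.Perm.ofSubtype τ).trans (Equiv.swap i₀ j)) i ∈ B).card
                = (A'.filter fun x => Equiv.swap i₀ j (τ x).1 ∈ B).card := by
              symm
              apply Finset.card_bij (fun x _ => x.1)
              · intro x hx
                rw [Finset.mem_filter] at hx ⊢
                obtain ⟨hx1, hx2⟩ := hx
                rw [hA', Finset.mem_subtype] at hx1
                refine ⟨hx1, ?_⟩
                rw [hΦx τ x.1 x.2]
                rwa [Subtype.coe_eta]
              · intro x₁ _ x₂ _ h
                exact Subtype.ext h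
              · intro i hi
                rw [Finset.mem_filter] at hi
                obtain ⟨hi1, hi2⟩ := hi
                have hne : i ≠ i₀ := (Finset.mem_erase.mp hi1).1
                refine ⟨⟨i, hne⟩, ?_, rfl⟩
                rw [Finset.mem_filter, hA', Finset.mem_subtype]
                refine ⟨hi1, ?_⟩
                rw [hΦx τ i hne] at hi2
                exact hi2
            conv_lhs => rw [hAeq]
            rw [Finset.filter_insert]
            by_cases hj : j ∈ B
            · rw [if_pos (by rw [hΦi₀]; exact hj), if_pos hj,
                Finset.card_insert_of_notMem
                  (fun hmem => (Finset.mem_erase.mp (Finset.mem_filter.mp hmem).1).1 rfl),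
                hcards]
              omega
            · rw [if_neg (by rw [hΦi₀]; exact hj), if_neg hj, hcards]
              omega
          rw [hsplit, pow_add]
          by_cases hj : j ∈ B <;> simp [hj]
      -- bound each inner sum by the induction hypothesis
      have hSτ : ∀ j : α,
          (∑ τ : Equiv.Perm {x : α // x ≠ i₀},
            r ^ ((A'.filter fun x => Equiv.swap i₀ j (τ x).1 ∈ B).card))
          ≤ ((N-1).factorial : ℝ) *
            Real.exp ((r-1) * ((A.card:ℝ)-1) * ((B.erase j).card:ℝ) / ((N:ℝ)-1)) := by
        intro j
        have hIH := IH (N-1) (by omega) {x : α // x ≠ i₀} hcard'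
          A' (Finset.univ.filter (fun y : {x : α // x ≠ i₀} => Equiv.swap i₀ j y.1 ∈ B)) r hr
        have hpred : ∀ τ : Equiv.Perm {x : α // x ≠ i₀},
            (A'.filter fun x => τ x ∈ Finset.univ.filter
              (fun y : {x : α // x ≠ i₀} => Equiv.swap i₀ j y.1 ∈ B))
            = (A'.filter fun x => Equiv.swap i₀ j (τ x).1 ∈ B) := by
          intro τ
          apply Finset.filter_congr
          intro x _
          simp [Finset.mem_filter]
        simp only [hpred] at hIH
        rw [hA'card, hBcard' j, Nat.cast_sub ha1, Nat.cast_sub hN1, Nat.cast_one] at hIH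
        exact hIH
      -- transform each fiber term
      have hterm : ∀ j : α, (if j ∈ B then r else 1) *
          (((N-1).factorial : ℝ) *
            Real.exp ((r-1) * ((A.card:ℝ)-1) * ((B.erase j).card:ℝ) / ((N:ℝ)-1)))
          = if j ∈ B then
              r * (((N-1).factorial : ℝ) *
                Real.exp ((r-1) * ((A.card:ℝ)-1) * ((B.card:ℝ)-1) / ((N:ℝ)-1)))
            else
              ((N-1).factorial : ℝ) *
                Real.exp ((r-1) * ((A.card:ℝ)-1) * (B.card:ℝ) / ((N:ℝ)-1)) := by
        intro j
        by_cases hj : j ∈ B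
        · rw [if_pos hj, if_pos hj, Finset.card_erase_of_mem hj,
            Nat.cast_sub (Finset.card_pos.mpr ⟨j, hj⟩), Nat.cast_one]
        · rw [if_neg hj, if_neg hj, Finset.erase_eq_of_notMem hj, one_mul]
      -- put it together
      have hcompl : Finset.univ.filter (fun j : α => ¬ j ∈ B) = Bᶜ := by
        ext x; simp
      have hmem : Finset.univ.filter (fun j : α => j ∈ B) = B := by
        ext x; simp
      have step : (∑ σ : Equiv.Perm α, r ^ ((A.filter fun i => σ i ∈ B).card))
          ≤ (B.card:ℝ) * (r * (((N-1).factorial : ℝ) *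
                Real.exp ((r-1) * ((A.card:ℝ)-1) * ((B.card:ℝ)-1) / ((N:ℝ)-1))))
            + ((N:ℝ) - (B.card:ℝ)) * (((N-1).factorial : ℝ) *
                Real.exp ((r-1) * ((A.card:ℝ)-1) * (B.card:ℝ) / ((N:ℝ)-1))) := by
        rw [hfib]
        have h1 : ∀ j : α, ∑ σ ∈ Finset.univ.filter (fun σ : Equiv.Perm α => σ i₀ = j),
              r ^ ((A.filter fun i => σ i ∈ B).card)
            ≤ (if j ∈ B then r else 1) *
              (((N-1).factorial : ℝ) *
                Real.exp ((r-1) * ((A.card:ℝ)-1) * ((B.erase j).card:ℝ) / ((N:ℝ)-1))) := by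
          intro j
          rw [hfiber j]
          apply mul_le_mul_of_nonneg_left (hSτ j)
          split
          · exact hr
          · exact zero_le_one
        calc ∑ j : α, ∑ σ ∈ Finset.univ.filter (fun σ : Equiv.Perm α => σ i₀ = j),
              r ^ ((A.filter fun i => σ i ∈ B).card)
            ≤ ∑ j : α, (if j ∈ B then r else 1) *
              (((N-1).factorial : ℝ) *
                Real.exp ((r-1) * ((A.card:ℝ)-1) * ((B.erase j).card:ℝ) / ((N:ℝ)-1))) :=
              Finset.sum_le_sum (fun j _ => h1 j)
          _ = ∑ j : α, (if j ∈ B then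
                r * (((N-1).factorial : ℝ) *
                  Real.exp ((r-1) * ((A.card:ℝ)-1) * ((B.card:ℝ)-1) / ((N:ℝ)-1)))
              else
                ((N-1).factorial : ℝ) *
                  Real.exp ((r-1) * ((A.card:ℝ)-1) * (B.card:ℝ) / ((N:ℝ)-1))) :=
              Finset.sum_congr rfl (fun j _ => hterm j)
          _ = (B.card:ℝ) * (r * (((N-1).factorial : ℝ) *
                Real.exp ((r-1) * ((A.card:ℝ)-1) * ((B.card:ℝ)-1) / ((N:ℝ)-1))))
            + ((N:ℝ) - (B.card:ℝ)) * (((N-1).factorial : ℝ) *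
                Real.exp ((r-1) * ((A.card:ℝ)-1) * (B.card:ℝ) / ((N:ℝ)-1))) := by
              rw [Finset.sum_ite, Finset.sum_const, Finset.sum_const, hcompl, hmem,
                Finset.card_compl, hcard, nsmul_eq_mul, nsmul_eq_mul, Nat.cast_sub hbN]
      refine step.trans ?_
      rcases le_or_gt 2 N with hN2 | hN2
      · have hanal := anal (a := A.card) (b := B.card) (N := N) r hr ha1 haN hN2
        have hNne : (N:ℝ) ≠ 0 := by positivity
        have hF0 : (0:ℝ) ≤ ((N-1).factorial : ℝ) := by positivity
        have hNfact : (N.factorial : ℝ) = (N:ℝ) * ((N-1).factorial : ℝ) := by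
          rw [← Nat.mul_factorial_pred (by omega : N ≠ 0)]
          push_cast
          ring
        calc (B.card:ℝ) * (r * (((N-1).factorial : ℝ) *
                Real.exp ((r-1) * ((A.card:ℝ)-1) * ((B.card:ℝ)-1) / ((N:ℝ)-1))))
            + ((N:ℝ) - (B.card:ℝ)) * (((N-1).factorial : ℝ) *
                Real.exp ((r-1) * ((A.card:ℝ)-1) * (B.card:ℝ) / ((N:ℝ)-1)))
            = ((N:ℝ) * ((N-1).factorial : ℝ)) *
              ((B.card:ℝ)/(N:ℝ) * r *
                  Real.exp ((r-1) * ((A.card:ℝ)-1) * ((B.card:ℝ)-1) / ((N:ℝ)-1))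
                + (1 - (B.card:ℝ)/(N:ℝ)) *
                  Real.exp ((r-1) * ((A.card:ℝ)-1) * (B.card:ℝ) / ((N:ℝ)-1))) := by
              field_simp
          _ ≤ ((N:ℝ) * ((N-1).factorial : ℝ)) *
              Real.exp ((r-1) * (A.card:ℝ) * (B.card:ℝ) / (N:ℝ)) := by
              apply mul_le_mul_of_nonneg_left hanal (by positivity)
          _ = (N.factorial : ℝ) * Real.exp ((r-1) * (A.card:ℝ) * (B.card:ℝ) / (N:ℝ)) := by
              rw [hNfact]
      · have hNeq : N = 1 := by omega
        subst hNeq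
        have haA : A.card = 1 := le_antisymm haN ha1
        have hb01 : B.card = 0 ∨ B.card = 1 := by omega
        rcases hb01 with hb | hb <;> rw [haA, hb] <;> norm_num
        linarith [Real.add_one_le_exp (r-1)]

lemma sum_prod_pi {P : Type} [Fintype P] : ∀ (d : ℕ) (g : P → ℝ),
    ∑ π : Fin d → P, ∏ k, g (π k) = (∑ σ : P, g σ) ^ d := by
  intro d
  induction d with
  | zero => intro g; simp
  | succ d ih =>
    intro g
    calc ∑ π : Fin (d+1) → P, ∏ k, g (π k)
        = ∑ q : P × (Fin d → P), g q.1 * ∏ k : Fin d, g (q.2 k) := by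
          apply Fintype.sum_equiv (Fin.consEquiv (fun _ : Fin (d+1) => P)).symm
          intro π
          rw [Fin.prod_univ_succ]
          rfl
      _ = (∑ σ : P, g σ) * ∑ π : Fin d → P, ∏ k, g (π k) := by
          rw [Fintype.sum_prod_type]
          dsimp only
          rw [← Finset.sum_mul_sum]
      _ = (∑ σ : P, g σ)^(d+1) := by rw [ih, pow_succ]; ring

lemma sumPow (n d : ℕ) (hn : 1 ≤ n) (A B : Finset (Fin n)) (r : ℝ) (hr : 0 ≤ r) :
    ∑ π : Fin d → Equiv.Perm (Fin n), r ^ (eperm π A B)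
      ≤ ((Nat.factorial n : ℝ))^d * Real.exp ((r-1) * (((d:ℝ)/n) * A.card * B.card)) := by
  have h1 : ∀ π : Fin d → Equiv.Perm (Fin n), (r:ℝ) ^ (eperm π A B)
      = ∏ k : Fin d, r ^ ((A.filter fun i => π k i ∈ B).card) := by
    intro π
    rw [eperm, Finset.prod_pow_eq_pow_sum]
  have hstep : ∑ π : Fin d → Equiv.Perm (Fin n), r ^ (eperm π A B)
      = (∑ σ : Equiv.Perm (Fin n), r ^ ((A.filter fun i => σ i ∈ B).card))^d := by
    rw [← sum_prod_pi d (fun σ : Equiv.Perm (Fin n) =>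
      r ^ ((A.filter fun i => σ i ∈ B).card))]
    exact Finset.sum_congr rfl (fun π _ => h1 π)
  rw [hstep]
  have hkey := key n (Fin n) (by simp) A B r hr
  have hnonneg : (0:ℝ) ≤ ∑ σ : Equiv.Perm (Fin n), r ^ ((A.filter fun i => σ i ∈ B).card) :=
    Finset.sum_nonneg (fun σ _ => pow_nonneg hr _)
  calc (∑ σ : Equiv.Perm (Fin n), r ^ ((A.filter fun i => σ i ∈ B).card))^d
      ≤ ((Nat.factorial n : ℝ) * Real.exp ((r - 1) * (A.card:ℝ) * (B.card:ℝ) / (n:ℝ)))^d :=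
        pow_le_pow_left₀ hnonneg hkey d
    _ = ((Nat.factorial n : ℝ))^d * Real.exp ((r-1) * (((d:ℝ)/n) * A.card * B.card)) := by
        rw [mul_pow, ← Real.exp_nat_mul]
        congr 1
        ring

lemma markov_count {n d : ℕ} (A B : Finset (Fin n)) (r θ : ℝ)
    (S : Finset (Fin d → Equiv.Perm (Fin n)))
    (hθ : ∀ π ∈ S, θ ≤ r ^ (eperm π A B)) (hr : 0 ≤ r) :
    (S.card : ℝ) * θ ≤ ∑ π : Fin d → Equiv.Perm (Fin n), r ^ (eperm π A B) := by
  calc (S.card:ℝ) * θ = ∑ _π ∈ S, θ := by rw [Finset.sum_const, nsmul_eq_mul]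
    _ ≤ ∑ π ∈ S, r ^ eperm π A B := Finset.sum_le_sum hθ
    _ ≤ ∑ π : Fin d → Equiv.Perm (Fin n), r ^ (eperm π A B) :=
        Finset.sum_le_sum_of_subset_of_nonneg (Finset.subset_univ S)
          (fun i _ _ => pow_nonneg hr _)

set_option maxHeartbeats 2000000 in
theorem stmt_6 :
    ∀ n d : ℕ, 1 ≤ n → 1 ≤ d → ∀ A B : Finset (Fin n), ∀ τ : ℝ, 0 ≤ τ →
      PrPerm n d (fun π =>
          τ * (((d : ℝ) / n) * A.card * B.card) ≤
            |(eperm π A B : ℝ) - ((d : ℝ) / n) * A.card * B.card|) ≤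
        2 * Real.exp (-(τ ^ 2 * (((d : ℝ) / n) * A.card * B.card)) / (2 + τ)) := by
  intro n d hn hd A B τ hτ
  set μ : ℝ := ((d:ℝ)/n) * A.card * B.card with hμ
  have hn0 : (0:ℝ) < n := by exact_mod_cast hn
  have hμ0 : (0:ℝ) ≤ μ := by rw [hμ]; positivity
  have h2τ : (0:ℝ) < 2 + τ := by linarith
  set K : ℝ := ((Nat.factorial n : ℝ))^d with hK
  have hK0 : (0:ℝ) < K := by rw [hK]; positivity
  have hKcard : (Fintype.card (Fin d → Equiv.Perm (Fin n)) : ℝ) = K := by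
    rw [hK]
    simp [Fintype.card_fun, Fintype.card_perm]
  rcases eq_or_lt_of_le hμ0 with hμz | hμpos
  · -- trivial case μ = 0
    have hP : PrPerm n d (fun π =>
        τ * μ ≤ |(eperm π A B : ℝ) - μ|) ≤ 1 := by
      rw [PrPerm]
      apply div_le_one_of_le₀
      · have h1 : (Finset.univ.filter fun π : Fin d → Equiv.Perm (Fin n) =>
            τ * μ ≤ |(eperm π A B : ℝ) - μ|).card
            ≤ Fintype.card (Fin d → Equiv.Perm (Fin n)) := by
          rw [← Finset.card_univ]
          exact Finset.card_filter_le _ _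
        exact_mod_cast h1
      · positivity
    have hR : 2 * Real.exp (-(τ ^ 2 * μ) / (2 + τ)) = 2 := by
      rw [← hμz]
      norm_num
    rw [hR]
    linarith
  rw [PrPerm, hKcard, div_le_iff₀ hK0]
  set Sup : Finset (Fin d → Equiv.Perm (Fin n)) :=
    Finset.univ.filter (fun π => (1+τ)*μ ≤ (eperm π A B : ℝ)) with hSup
  set Slow : Finset (Fin d → Equiv.Perm (Fin n)) :=
    Finset.univ.filter (fun π => (eperm π A B : ℝ) ≤ (1-τ)*μ) with hSlow
  have hEsub : (Finset.univ.filter fun π : Fin d → Equiv.Perm (Fin n) =>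
      τ * μ ≤ |(eperm π A B : ℝ) - μ|) ⊆ Sup ∪ Slow := by
    intro π hπ
    rw [Finset.mem_filter] at hπ
    rw [Finset.mem_union, hSup, hSlow, Finset.mem_filter, Finset.mem_filter]
    rcases le_abs.mp hπ.2 with h | h
    · exact Or.inl ⟨Finset.mem_univ _, by linarith⟩
    · exact Or.inr ⟨Finset.mem_univ _, by linarith⟩
  have hcardE : ((Finset.univ.filter fun π : Fin d → Equiv.Perm (Fin n) =>
      τ * μ ≤ |(eperm π A B : ℝ) - μ|).card : ℝ) ≤ (Sup.card : ℝ) + (Slow.card : ℝ) := by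
    have h1 := Finset.card_le_card hEsub
    have h2 := Finset.card_union_le Sup Slow
    exact_mod_cast le_trans h1 h2
  -- upper tail
  have hup : (Sup.card : ℝ) ≤ K * Real.exp (-(τ^2*μ)/(2+τ)) := by
    have hr0 : (0:ℝ) < 1 + τ := by linarith
    have hr1 : (1:ℝ) ≤ 1 + τ := by linarith
    have hθ : ∀ π ∈ Sup, Real.exp ((1+τ)*μ*Real.log (1+τ)) ≤ (1+τ) ^ (eperm π A B) := by
      intro π hπ
      rw [hSup, Finset.mem_filter] at hπ
      have hpow : ((1+τ):ℝ) ^ (eperm π A B)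
          = Real.exp ((eperm π A B : ℝ) * Real.log (1+τ)) := by
        rw [Real.exp_nat_mul, Real.exp_log hr0]
      rw [hpow]
      exact Real.exp_le_exp.mpr
        (mul_le_mul_of_nonneg_right hπ.2 (Real.log_nonneg hr1))
    have hmar := markov_count A B (1+τ) (Real.exp ((1+τ)*μ*Real.log (1+τ))) Sup hθ
      (le_of_lt hr0)
    have hsp := sumPow n d hn A B (1+τ) (le_of_lt hr0)
    rw [← hμ] at hsp
    have hr1' : ((1:ℝ)+τ-1) = τ := by ring
    rw [hr1'] at hsp
    have h3 : (Sup.card : ℝ) * Real.exp ((1+τ)*μ*Real.log (1+τ)) ≤ K * Real.exp (τ*μ) := by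
      rw [hK]
      exact le_trans hmar hsp
    have h4 : (Sup.card : ℝ) ≤ K * Real.exp (τ*μ - (1+τ)*μ*Real.log (1+τ)) := by
      rw [Real.exp_sub, ← mul_div_assoc, le_div_iff₀ (Real.exp_pos _)]
      exact h3
    refine h4.trans (mul_le_mul_of_nonneg_left (Real.exp_le_exp.mpr ?_) (le_of_lt hK0))
    have h5 := mul_le_mul_of_nonneg_right (U2 hτ) hμ0
    rw [div_mul_eq_mul_div] at h5
    rw [neg_div]
    nlinarith [h5]
  -- lower tail
  have hlow : (Slow.card : ℝ) ≤ K * Real.exp (-(τ^2*μ)/(2+τ)) := by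
    rcases lt_trichotomy τ 1 with hτ1 | hτ1 | hτ1
    · have hs0 : (0:ℝ) < 1 - τ := by linarith
      have hθ : ∀ π ∈ Slow, Real.exp ((1-τ)*μ*Real.log (1-τ)) ≤ (1-τ) ^ (eperm π A B) := by
        intro π hπ
        rw [hSlow, Finset.mem_filter] at hπ
        have hpow : ((1-τ):ℝ) ^ (eperm π A B)
            = Real.exp ((eperm π A B : ℝ) * Real.log (1-τ)) := by
          rw [Real.exp_nat_mul, Real.exp_log hs0]
        rw [hpow]
        apply Real.exp_le_exp.mpr
        have hlogs : Real.log (1-τ) ≤ 0 := Real.log_nonpos (le_of_lt hs0) (by linarith)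
        exact mul_le_mul_of_nonpos_right hπ.2 hlogs
      have hmar := markov_count A B (1-τ) (Real.exp ((1-τ)*μ*Real.log (1-τ))) Slow hθ
        (le_of_lt hs0)
      have hsp := sumPow n d hn A B (1-τ) (le_of_lt hs0)
      rw [← hμ] at hsp
      have hs1' : ((1:ℝ)-τ-1) = -τ := by ring
      rw [hs1'] at hsp
      have h3 : (Slow.card : ℝ) * Real.exp ((1-τ)*μ*Real.log (1-τ))
          ≤ K * Real.exp (-(τ*μ)) := by
        rw [hK]
        refine le_trans hmar (le_trans hsp (le_of_eq ?_))
        congr 1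
        ring
      have h4 : (Slow.card : ℝ) ≤ K * Real.exp (-(τ*μ) - (1-τ)*μ*Real.log (1-τ)) := by
        rw [Real.exp_sub, ← mul_div_assoc, le_div_iff₀ (Real.exp_pos _)]
        exact h3
      refine h4.trans (mul_le_mul_of_nonneg_left (Real.exp_le_exp.mpr ?_) (le_of_lt hK0))
      have h5 := mul_le_mul_of_nonneg_right (L2 hτ hτ1) hμ0
      rw [div_mul_eq_mul_div] at h5
      rw [neg_div]
      nlinarith [h5]
    · subst hτ1
      have hθ : ∀ π ∈ Slow, (1:ℝ) ≤ (0:ℝ) ^ (eperm π A B) := by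
        intro π hπ
        rw [hSlow, Finset.mem_filter] at hπ
        have he0 : (eperm π A B : ℝ) ≤ 0 := by
          have h6 := hπ.2
          nlinarith [h6]
        have h7 : eperm π A B = 0 := by exact_mod_cast le_antisymm he0 (Nat.cast_nonneg _)
        rw [h7, pow_zero]
      have hmar := markov_count A B 0 1 Slow hθ le_rfl
      have hsp := sumPow n d hn A B 0 le_rfl
      rw [← hμ] at hsp
      have h3 : (Slow.card : ℝ) ≤ K * Real.exp (-μ) := by
        rw [hK]
        have h8 := le_trans hmar hsp
        rw [mul_one] at h8
        refine h8.trans (le_of_eq ?_)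
        congr 1
        ring
      refine h3.trans (mul_le_mul_of_nonneg_left (Real.exp_le_exp.mpr ?_) (le_of_lt hK0))
      rw [neg_div]
      nlinarith [hμ0]
    · have hempty : Slow = ∅ := by
        rw [hSlow]
        apply Finset.filter_false_of_mem
        intro π _
        push_neg
        calc (1-τ)*μ < 0 := by nlinarith
          _ ≤ (eperm π A B : ℝ) := Nat.cast_nonneg _
      rw [hempty]
      simp only [Finset.card_empty, Nat.cast_zero]
      positivity
  calc ((Finset.univ.filter fun π : Fin d → Equiv.Perm (Fin n) =>
      τ * μ ≤ |(eperm π A B : ℝ) - μ|).card : ℝ)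
      ≤ (Sup.card : ℝ) + (Slow.card : ℝ) := hcardE
    _ ≤ K * Real.exp (-(τ^2*μ)/(2+τ)) + K * Real.exp (-(τ^2*μ)/(2+τ)) := add_le_add hup hlow
    _ = 2 * Real.exp (-(τ^2*μ)/(2+τ)) * K := by ring
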